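/- Suppose ζ₀ : [−ℓ,ℓ] → ℝ is twice continuously differentiable and solves the equilibrium capillary problem with some pressure P₀ ∈ ℝ, and set M_top = ∫_{−ℓ}^{ℓ} ζ₀(x) dx. Then for every η ∈ W^{1,1}((−ℓ,ℓ)) with ∫_{−ℓ}^{ℓ} η(x) dx = M_top, one has 𝓘(ζ₀) ≤ 𝓘(η). -/

import Mathlib

open Set MeasureTheory

/-- One-sided derivative of a function regarded as a function on `[-ℓ, ℓ]`. -/
noncomputable def capD (ℓ : ℝ) (ζ : ℝ → ℝ) : ℝ → ℝ :=
  derivWithin ζ (Set.Icc (-ℓ) ℓ)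

/-- The mean curvature operator `𝓗(ζ) = (ζ'/√(1+(ζ')²))'` on `[-ℓ, ℓ]`. -/
noncomputable def meanCurv (ℓ : ℝ) (ζ : ℝ → ℝ) : ℝ → ℝ :=
  derivWithin (fun x => capD ℓ ζ x / Real.sqrt (1 + (capD ℓ ζ x) ^ 2)) (Set.Icc (-ℓ) ℓ)

/-- `ζ` is a twice continuously differentiable solution of the equilibrium capillary
problem on `[-ℓ, ℓ]` with pressure `P`. -/
def IsCapSol (g σ ℓ γ P : ℝ) (ζ : ℝ → ℝ) : Prop :=
  ContDiffOn ℝ 2 ζ (Set.Icc (-ℓ) ℓ) ∧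
  (∀ x ∈ Set.Ioo (-ℓ) ℓ, g * ζ x - σ * meanCurv ℓ ζ x = P) ∧
  σ * capD ℓ ζ ℓ / Real.sqrt (1 + (capD ℓ ζ ℓ) ^ 2) = γ ∧
  σ * capD ℓ ζ (-ℓ) / Real.sqrt (1 + (capD ℓ ζ (-ℓ)) ^ 2) = -γ

/-- The capillary energy functional `𝓘`, expressed in terms of a function `ζ`
and its derivative `ζ'`. -/
noncomputable def capEnergy (g σ ℓ γ : ℝ) (ζ ζ' : ℝ → ℝ) : ℝ :=
  (∫ x in (-ℓ)..ℓ, (g / 2 * ζ x ^ 2 + σ * Real.sqrt (1 + ζ' x ^ 2))) -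
    γ * (ζ ℓ + ζ (-ℓ))

/-- `ψ ∈ W^{1,1}((-ℓ,ℓ))` with weak derivative `ψ'`. -/
def IsW11 (ℓ : ℝ) (ψ ψ' : ℝ → ℝ) : Prop :=
  MeasureTheory.IntegrableOn ψ' (Set.Ioo (-ℓ) ℓ) ∧
  ∀ x ∈ Set.Icc (-ℓ) ℓ, ψ x = ψ (-ℓ) + ∫ t in (-ℓ)..x, ψ' t

/-- An equilibrium capillary surface minimizes the energy `𝓘`
among all `W^{1,1}` functions with the same total mass. -/
lemma convex_sqrt_ineq (A B : ℝ) :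
    Real.sqrt (1 + A ^ 2) + A / Real.sqrt (1 + A ^ 2) * (B - A) ≤ Real.sqrt (1 + B ^ 2) := by
  have hA : (0:ℝ) < 1 + A ^ 2 := by positivity
  have hB : (0:ℝ) < 1 + B ^ 2 := by positivity
  have hsA : 0 < Real.sqrt (1 + A ^ 2) := Real.sqrt_pos.2 hA
  have hsB : 0 < Real.sqrt (1 + B ^ 2) := Real.sqrt_pos.2 hB
  have hA2 : Real.sqrt (1 + A ^ 2) ^ 2 = 1 + A ^ 2 := Real.sq_sqrt hA.le
  have hB2 : Real.sqrt (1 + B ^ 2) ^ 2 = 1 + B ^ 2 := Real.sq_sqrt hB.le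
  have key : 1 + A * B ≤ Real.sqrt (1 + A ^ 2) * Real.sqrt (1 + B ^ 2) := by
    nlinarith [sq_nonneg (A - B), sq_nonneg (Real.sqrt (1 + A ^ 2) - Real.sqrt (1 + B ^ 2)),
      mul_pos hsA hsB, sq_nonneg (A*B)]
  rw [div_mul_eq_mul_div, ← sub_nonneg]
  have : Real.sqrt (1 + B ^ 2) - (Real.sqrt (1 + A ^ 2) + A * (B - A) / Real.sqrt (1 + A ^ 2))
      = (Real.sqrt (1 + B ^ 2) * Real.sqrt (1 + A ^ 2) - (1 + A * B)) / Real.sqrt (1 + A ^ 2) := by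
    field_simp
    nlinarith [hA2]
  rw [this]
  exact div_nonneg (by linarith [key]) hsA.le

lemma swap_tri (a b : ℝ) (f ψ : ℝ → ℝ)
    (hf : IntegrableOn f (Ioc a b)) (hψ : IntegrableOn ψ (Ioc a b)) :
    ∫ x in Ioc a b, f x * (∫ t in Ioc a x, ψ t) =
      ∫ t in Ioc a b, (∫ x in Ioc t b, f x) * ψ t := by
  set μ := volume.restrict (Ioc a b) with hμ
  set H : ℝ → ℝ → ℝ := fun x t => if t ≤ x then f x * ψ t else 0 with hH
  have hs : MeasurableSet {p : ℝ × ℝ | p.2 ≤ p.1} :=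
    measurableSet_le measurable_snd measurable_fst
  have hint : Integrable (Function.uncurry H) (μ.prod μ) := by
    have h1 : Integrable (fun p : ℝ × ℝ => f p.1 * ψ p.2) (μ.prod μ) := Integrable.mul_prod hf hψ
    have : Function.uncurry H =
        {p : ℝ × ℝ | p.2 ≤ p.1}.indicator (fun p => f p.1 * ψ p.2) := by
      funext p
      simp [Function.uncurry, hH, Set.indicator_apply, Set.mem_setOf_eq]
    rw [this]
    exact h1.indicator hs
  have hswap := integral_integral_swap hint
  have hL : (∫ x, ∫ t, H x t ∂μ ∂μ) = ∫ x in Ioc a b, f x * (∫ t in Ioc a x, ψ t) := by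
    apply integral_congr_ae
    filter_upwards [ae_restrict_mem measurableSet_Ioc] with x hx
    have h1 : (fun t => H x t) = (Iic x).indicator (fun t => f x * ψ t) := by
      funext t; simp [hH, Set.indicator_apply]
    rw [h1, integral_indicator measurableSet_Iic, hμ,
      Measure.restrict_restrict measurableSet_Iic]
    have h2 : Iic x ∩ Ioc a b = Ioc a x := by
      ext t
      simp only [mem_inter_iff, mem_Iic, mem_Ioc]
      constructor
      · rintro ⟨h1, h2, h3⟩; exact ⟨h2, h1⟩
      · rintro ⟨h1, h2⟩; exact ⟨h2, h1, le_trans h2 hx.2⟩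
    rw [h2, integral_const_mul]
  have hR : (∫ t, ∫ x, H x t ∂μ ∂μ) = ∫ t in Ioc a b, (∫ x in Ioc t b, f x) * ψ t := by
    apply integral_congr_ae
    filter_upwards [ae_restrict_mem measurableSet_Ioc] with t ht
    have h1 : (fun x => H x t) = (Ici t).indicator (fun x => f x * ψ t) := by
      funext x; simp [hH, Set.indicator_apply]
    rw [h1, integral_indicator measurableSet_Ici, hμ,
      Measure.restrict_restrict measurableSet_Ici]
    have h2 : Ici t ∩ Ioc a b = Icc t b := by
      ext x
      simp only [mem_inter_iff, mem_Ici, mem_Ioc, mem_Icc]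
      constructor
      · rintro ⟨h1, _, h3⟩; exact ⟨h1, h3⟩
      · rintro ⟨h1, h2⟩; exact ⟨h1, lt_of_lt_of_le ht.1 h1, h2⟩
    rw [h2, integral_Icc_eq_integral_Ioc, integral_mul_const]
  rw [← hL, ← hR, hswap]

theorem stmt5 (g σ ℓ γ P₀ : ℝ) (hg : 0 < g) (hσ : 0 < σ) (hℓ : 0 < ℓ)
    (ζ₀ : ℝ → ℝ) (hζ₀ : IsCapSol g σ ℓ γ P₀ ζ₀)
    (η η' : ℝ → ℝ) (hη : IsW11 ℓ η η')
    (hM : (∫ x in (-ℓ)..ℓ, η x) = ∫ x in (-ℓ)..ℓ, ζ₀ x) :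
    capEnergy g σ ℓ γ ζ₀ (capD ℓ ζ₀) ≤ capEnergy g σ ℓ γ η η' := by
  obtain ⟨hC2, hODE, hbc1, hbc2⟩ := hζ₀
  obtain ⟨hη'i, hrep⟩ := hη
  have hab : (-ℓ) ≤ ℓ := by linarith
  have hab' : (-ℓ) < ℓ := by linarith
  have hUD : UniqueDiffOn ℝ (Icc (-ℓ) ℓ) := uniqueDiffOn_Icc hab'
  set Z' : ℝ → ℝ := capD ℓ ζ₀ with hZ'def
  set F : ℝ → ℝ := fun x => Z' x / Real.sqrt (1 + Z' x ^ 2) with hFdef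
  have hmc : meanCurv ℓ ζ₀ = derivWithin F (Icc (-ℓ) ℓ) := rfl
  -- smoothness facts
  have hζcont : ContinuousOn ζ₀ (Icc (-ℓ) ℓ) := hC2.continuousOn
  have hZ'C1 : ContDiffOn ℝ 1 Z' (Icc (-ℓ) ℓ) := hC2.derivWithin hUD (by norm_num)
  have hZ'cont : ContinuousOn Z' (Icc (-ℓ) ℓ) := hZ'C1.continuousOn
  have houter : ContDiff ℝ 1 (fun t : ℝ => t / Real.sqrt (1 + t ^ 2)) := by
    apply ContDiff.div contDiff_id
    · exact (contDiff_const.add (contDiff_id.pow 2)).sqrt (fun x => by positivity)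
    · intro x
      exact ne_of_gt (Real.sqrt_pos.2 (by positivity))
  have hFC1 : ContDiffOn ℝ 1 F (Icc (-ℓ) ℓ) := houter.comp_contDiffOn hZ'C1
  have hFcont : ContinuousOn F (Icc (-ℓ) ℓ) := hFC1.continuousOn
  have hF'cont : ContinuousOn (meanCurv ℓ ζ₀) (Icc (-ℓ) ℓ) := by
    rw [hmc]; exact hFC1.continuousOn_derivWithin hUD le_rfl
  -- derivative facts
  have hζdW : ∀ x ∈ Icc (-ℓ) ℓ, HasDerivWithinAt ζ₀ (Z' x) (Icc (-ℓ) ℓ) x :=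
    fun x hx => ((hC2.differentiableOn (by norm_num)) x hx).hasDerivWithinAt
  have hFdW : ∀ x ∈ Icc (-ℓ) ℓ, HasDerivWithinAt F (meanCurv ℓ ζ₀ x) (Icc (-ℓ) ℓ) x := by
    intro x hx
    have h := ((hFC1.differentiableOn one_ne_zero) x hx).hasDerivWithinAt
    rwa [← hmc] at h
  have hζdA : ∀ x ∈ Ioo (-ℓ) ℓ, HasDerivAt ζ₀ (Z' x) x := fun x hx =>
    (hζdW x (Ioo_subset_Icc_self hx)).hasDerivAt (Icc_mem_nhds hx.1 hx.2)
  have hFdA : ∀ x ∈ Ioo (-ℓ) ℓ, HasDerivAt F (meanCurv ℓ ζ₀ x) x := fun x hx =>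
    (hFdW x (Ioo_subset_Icc_self hx)).hasDerivAt (Icc_mem_nhds hx.1 hx.2)
  -- FTC
  have hFTCζ : ∀ x ∈ Icc (-ℓ) ℓ, ∫ t in (-ℓ)..x, Z' t = ζ₀ x - ζ₀ (-ℓ) := by
    intro x hx
    exact intervalIntegral.integral_eq_sub_of_hasDeriv_right_of_le hx.1
      (hζcont.mono (Icc_subset_Icc le_rfl hx.2))
      (fun t ht => ((hζdA t ⟨ht.1, lt_of_lt_of_le ht.2 hx.2⟩).hasDerivWithinAt))
      ((hZ'cont.mono (Icc_subset_Icc le_rfl hx.2)).intervalIntegrable_of_Icc hx.1)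
  have hFTCF : ∀ t ∈ Icc (-ℓ) ℓ, ∫ x in t..ℓ, meanCurv ℓ ζ₀ x = F ℓ - F t := by
    intro t ht
    exact intervalIntegral.integral_eq_sub_of_hasDeriv_right_of_le ht.2
      (hFcont.mono (Icc_subset_Icc ht.1 le_rfl))
      (fun x hx => (hFdA x ⟨lt_of_le_of_lt ht.1 hx.1, hx.2⟩).hasDerivWithinAt)
      ((hF'cont.mono (Icc_subset_Icc ht.1 le_rfl)).intervalIntegrable_of_Icc ht.2)
  -- basic integrability on Ioc
  set I : Set ℝ := Ioc (-ℓ) ℓ with hIdef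
  have hImeas : MeasurableSet I := measurableSet_Ioc
  have hsub : I ⊆ Icc (-ℓ) ℓ := Ioc_subset_Icc_self
  have hζint : IntegrableOn ζ₀ I := (hζcont.integrableOn_Icc).mono_set hsub
  have hZ'int : IntegrableOn Z' I := (hZ'cont.integrableOn_Icc).mono_set hsub
  have hFint : IntegrableOn F I := (hFcont.integrableOn_Icc).mono_set hsub
  have hF'int : IntegrableOn (meanCurv ℓ ζ₀) I := (hF'cont.integrableOn_Icc).mono_set hsub
  have hη'Ioc : IntegrableOn η' I := (integrableOn_Ioc_iff_integrableOn_Ioo).2 hη'i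
  have hη'Icc : IntegrableOn η' (Icc (-ℓ) ℓ) := (integrableOn_Icc_iff_integrableOn_Ioo).2 hη'i
  set φ : ℝ → ℝ := fun x => η x - ζ₀ x with hφdef
  set φ' : ℝ → ℝ := fun x => η' x - Z' x with hφ'def
  have hφ'Ioc : IntegrableOn φ' I := hη'Ioc.sub hZ'int
  have hφ'Icc : IntegrableOn φ' (Icc (-ℓ) ℓ) := hη'Icc.sub hZ'cont.integrableOn_Icc
  -- continuity of η
  have hprim : ContinuousOn (fun x => ∫ t in Ioc (-ℓ) x, η' t) (Icc (-ℓ) ℓ) :=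
    intervalIntegral.continuousOn_primitive hη'Icc
  have hηcont : ContinuousOn η (Icc (-ℓ) ℓ) := by
    apply ContinuousOn.congr ((continuousOn_const : ContinuousOn (fun _ => η (-ℓ)) (Icc (-ℓ) ℓ)).add hprim)
    intro x hx
    rw [hrep x hx, intervalIntegral.integral_of_le hx.1]
    rfl
  have hηint : IntegrableOn η I := (hηcont.integrableOn_Icc).mono_set hsub
  have hφcont : ContinuousOn φ (Icc (-ℓ) ℓ) := hηcont.sub hζcont
  have hφint : IntegrableOn φ I := hηint.sub hζint
  -- representation of φ
  have hζii : ∀ x ∈ Icc (-ℓ) ℓ, IntervalIntegrable Z' volume (-ℓ) x := fun x hx =>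
    (hZ'cont.mono (Icc_subset_Icc le_rfl hx.2)).intervalIntegrable_of_Icc hx.1
  have hη'ii : ∀ x ∈ Icc (-ℓ) ℓ, IntervalIntegrable η' volume (-ℓ) x := fun x hx =>
    (intervalIntegrable_iff_integrableOn_Icc_of_le hx.1).2
      (hη'Icc.mono_set (Icc_subset_Icc le_rfl hx.2))
  have hφrep : ∀ x ∈ Icc (-ℓ) ℓ, φ x = φ (-ℓ) + ∫ t in Ioc (-ℓ) x, φ' t := by
    intro x hx
    have h1 := hrep x hx
    have h2 := hFTCζ x hx
    have h3 : ∫ t in (-ℓ)..x, φ' t = (∫ t in (-ℓ)..x, η' t) - ∫ t in (-ℓ)..x, Z' t :=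
      intervalIntegral.integral_sub (hη'ii x hx) (hζii x hx)
    rw [← intervalIntegral.integral_of_le hx.1]
    simp only [hφdef]
    rw [h3]
    linarith [h1, h2]
  have hφ'tot : ∫ t in I, φ' t = φ ℓ - φ (-ℓ) := by
    have := hφrep ℓ ⟨hab, le_rfl⟩
    rw [hIdef]; linarith [this]
  have hφtot : ∫ x in I, φ x = 0 := by
    have h1 : ∫ x in I, φ x = (∫ x in I, η x) - ∫ x in I, ζ₀ x := integral_sub hηint hζint
    rw [h1, ← intervalIntegral.integral_of_le hab, ← intervalIntegral.integral_of_le hab, hM,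
      sub_self]
  -- bound |F| ≤ 1 and integrability of F * φ'
  have hFbdd : ∀ x, |F x| ≤ 1 := by
    intro x
    have h1 : (0:ℝ) < Real.sqrt (1 + Z' x ^ 2) := Real.sqrt_pos.2 (by positivity)
    rw [hFdef, abs_div, abs_of_pos h1, div_le_one h1]
    calc |Z' x| = Real.sqrt (Z' x ^ 2) := (Real.sqrt_sq_eq_abs _).symm
    _ ≤ Real.sqrt (1 + Z' x ^ 2) := Real.sqrt_le_sqrt (by linarith)
  have hFφ'int : IntegrableOn (fun x => F x * φ' x) I := by
    apply Integrable.mono' hφ'Ioc.norm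
      (((hFcont.mono hsub).aestronglyMeasurable hImeas).mul hφ'Ioc.aestronglyMeasurable)
    filter_upwards with x
    simp only [Pi.mul_apply, norm_mul, Real.norm_eq_abs]
    calc |F x| * |φ' x| ≤ 1 * |φ' x| :=
      mul_le_mul_of_nonneg_right (hFbdd x) (abs_nonneg _)
    _ = |φ' x| := one_mul _
  -- integrability of sqrt (1 + η'^2)
  have hsqc : Continuous (fun t : ℝ => Real.sqrt (1 + t ^ 2)) :=
    Real.continuous_sqrt.comp (continuous_const.add (continuous_pow 2))
  have hsqint : IntegrableOn (fun x => Real.sqrt (1 + η' x ^ 2)) I := by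
    apply Integrable.mono' (g := fun x => 1 + ‖η' x‖) ((integrable_const 1).add hη'Ioc.norm)
    · exact hsqc.comp_aestronglyMeasurable hη'Ioc.aestronglyMeasurable
    · filter_upwards with x
      rw [Real.norm_eq_abs, abs_of_nonneg (Real.sqrt_nonneg _), Real.norm_eq_abs]
      have h5 : Real.sqrt (1 + η' x ^ 2) ≤ Real.sqrt ((1 + |η' x|) ^ 2) := by
        apply Real.sqrt_le_sqrt
        nlinarith [abs_nonneg (η' x), sq_abs (η' x)]
      rwa [Real.sqrt_sq (by positivity)] at h5
  -- integrands
  have hbase_int : IntegrableOn (fun x => g / 2 * ζ₀ x ^ 2 + σ * Real.sqrt (1 + Z' x ^ 2)) I := by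
    have hc : ContinuousOn (fun x => g / 2 * ζ₀ x ^ 2 + σ * Real.sqrt (1 + Z' x ^ 2))
        (Icc (-ℓ) ℓ) :=
      (continuousOn_const.mul (hζcont.pow 2)).add
        (continuousOn_const.mul (hsqc.comp_continuousOn hZ'cont))
    exact hc.integrableOn_Icc.mono_set hsub
  have hR_int : IntegrableOn (fun x => g / 2 * η x ^ 2 + σ * Real.sqrt (1 + η' x ^ 2)) I := by
    have h1 : IntegrableOn (fun x => g / 2 * η x ^ 2) I :=
      ((continuousOn_const.mul (hηcont.pow 2)).integrableOn_Icc).mono_set hsub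
    exact h1.add (hsqint.const_mul σ)
  have hcorr1_int : IntegrableOn (fun x => g * ζ₀ x * φ x) I :=
    (((continuousOn_const.mul hζcont).mul hφcont).integrableOn_Icc).mono_set hsub
  have hcorr_int : IntegrableOn (fun x => g * ζ₀ x * φ x + σ * (F x * φ' x)) I :=
    hcorr1_int.add (hFφ'int.const_mul σ)
  -- pointwise convexity inequality
  have hpt : ∀ x, g / 2 * ζ₀ x ^ 2 + σ * Real.sqrt (1 + Z' x ^ 2) +
      (g * ζ₀ x * φ x + σ * (F x * φ' x)) ≤ g / 2 * η x ^ 2 + σ * Real.sqrt (1 + η' x ^ 2) := by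
    intro x
    have h1 := convex_sqrt_ineq (Z' x) (η' x)
    have h2 : σ * (Real.sqrt (1 + Z' x ^ 2) + Z' x / Real.sqrt (1 + Z' x ^ 2) * (η' x - Z' x))
        ≤ σ * Real.sqrt (1 + η' x ^ 2) := mul_le_mul_of_nonneg_left h1 hσ.le
    have h3 : g / 2 * ζ₀ x ^ 2 + g * ζ₀ x * φ x ≤ g / 2 * η x ^ 2 := by
      simp only [hφdef]
      nlinarith [sq_nonneg (η x - ζ₀ x), hg.le]
    have h4 : F x * φ' x = Z' x / Real.sqrt (1 + Z' x ^ 2) * (η' x - Z' x) := by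
      simp only [hFdef, hφ'def]
    rw [mul_add] at h2
    rw [h4]
    linarith [h2, h3]
  -- main integral inequality
  have hmono : ∫ x in I, (g / 2 * ζ₀ x ^ 2 + σ * Real.sqrt (1 + Z' x ^ 2) +
        (g * ζ₀ x * φ x + σ * (F x * φ' x))) ≤
      ∫ x in I, (g / 2 * η x ^ 2 + σ * Real.sqrt (1 + η' x ^ 2)) :=
    setIntegral_mono_on (hbase_int.add hcorr_int) hR_int hImeas (fun x _ => hpt x)
  have hsplit : ∫ x in I, (g / 2 * ζ₀ x ^ 2 + σ * Real.sqrt (1 + Z' x ^ 2) +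
        (g * ζ₀ x * φ x + σ * (F x * φ' x))) =
      (∫ x in I, (g / 2 * ζ₀ x ^ 2 + σ * Real.sqrt (1 + Z' x ^ 2))) +
        ∫ x in I, (g * ζ₀ x * φ x + σ * (F x * φ' x)) := integral_add hbase_int hcorr_int
  -- the correction term equals the boundary term
  have hbγ1 : σ * F ℓ = γ := by rw [hFdef, ← mul_div_assoc]; exact hbc1
  have hbγ2 : σ * F (-ℓ) = -γ := by rw [hFdef, ← mul_div_assoc]; exact hbc2
  have hF'φint : IntegrableOn (fun x => meanCurv ℓ ζ₀ x * φ x) I :=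
    ((hF'cont.mul hφcont).integrableOn_Icc).mono_set hsub
  have hsplit2 : ∫ x in I, (g * ζ₀ x * φ x + σ * (F x * φ' x)) =
      (∫ x in I, g * ζ₀ x * φ x) + σ * ∫ x in I, F x * φ' x := by
    rw [integral_add hcorr1_int (hFφ'int.const_mul σ), integral_const_mul]
  have hA : ∫ x in I, g * ζ₀ x * φ x = σ * ∫ x in I, meanCurv ℓ ζ₀ x * φ x := by
    rw [hIdef, integral_Ioc_eq_integral_Ioo, integral_Ioc_eq_integral_Ioo]
    have hcg : EqOn (fun x => g * ζ₀ x * φ x)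
        (fun x => P₀ * φ x + σ * (meanCurv ℓ ζ₀ x * φ x)) (Ioo (-ℓ) ℓ) := by
      intro x hx
      have h := hODE x hx
      simp only
      linear_combination φ x * h
    have hφintP : IntegrableOn (fun x => P₀ * φ x) I := hφint.const_mul P₀
    have hF'φσ : IntegrableOn (fun x => σ * (meanCurv ℓ ζ₀ x * φ x)) I := hF'φint.const_mul σ
    rw [setIntegral_congr_fun measurableSet_Ioo hcg,
      integral_add (hφintP.mono_set Ioo_subset_Ioc_self)
        (hF'φσ.mono_set Ioo_subset_Ioc_self),
      integral_const_mul, integral_const_mul, ← integral_Ioc_eq_integral_Ioo,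
      ← integral_Ioc_eq_integral_Ioo]
    have h0 : ∫ x in Ioc (-ℓ) ℓ, φ x = 0 := by rw [← hIdef]; exact hφtot
    rw [h0, mul_zero, zero_add]
  have hφprimc : ContinuousOn (fun x => ∫ t in Ioc (-ℓ) x, φ' t) (Icc (-ℓ) ℓ) :=
    intervalIntegral.continuousOn_primitive hφ'Icc
  have hF'tot : ∫ x in I, meanCurv ℓ ζ₀ x = F ℓ - F (-ℓ) := by
    rw [hIdef, ← intervalIntegral.integral_of_le hab]
    exact hFTCF (-ℓ) ⟨le_rfl, hab⟩
  have hB : ∫ x in I, meanCurv ℓ ζ₀ x * φ x =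
      φ (-ℓ) * (F ℓ - F (-ℓ)) + (F ℓ * (φ ℓ - φ (-ℓ)) - ∫ x in I, F x * φ' x) := by
    have hcg2 : EqOn (fun x => meanCurv ℓ ζ₀ x * φ x)
        (fun x => meanCurv ℓ ζ₀ x * φ (-ℓ) +
          meanCurv ℓ ζ₀ x * (∫ t in Ioc (-ℓ) x, φ' t)) I := by
      intro x hx
      simp only
      rw [hφrep x (hsub hx)]
      ring
    have hprimint : IntegrableOn (fun x => meanCurv ℓ ζ₀ x * (∫ t in Ioc (-ℓ) x, φ' t)) I :=
      ((hF'cont.mul hφprimc).integrableOn_Icc).mono_set hsub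
    rw [setIntegral_congr_fun hImeas hcg2,
      integral_add (hF'int.mul_const _)
        hprimint,
      integral_mul_const, hF'tot]
    have hswap : ∫ x in I, meanCurv ℓ ζ₀ x * (∫ t in Ioc (-ℓ) x, φ' t) =
        ∫ t in I, (∫ x in Ioc t ℓ, meanCurv ℓ ζ₀ x) * φ' t := by
      rw [hIdef]
      exact swap_tri (-ℓ) ℓ (meanCurv ℓ ζ₀) φ' (by rw [← hIdef]; exact hF'int)
        (by rw [← hIdef]; exact hφ'Ioc)
    rw [hswap]
    have hcg3 : EqOn (fun t => (∫ x in Ioc t ℓ, meanCurv ℓ ζ₀ x) * φ' t)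
        (fun t => F ℓ * φ' t - F t * φ' t) I := by
      intro t ht
      simp only
      rw [← intervalIntegral.integral_of_le (hsub ht).2, hFTCF t (hsub ht)]
      ring
    rw [setIntegral_congr_fun hImeas hcg3,
      integral_sub (hφ'Ioc.const_mul (F ℓ)) hFφ'int, integral_const_mul, hφ'tot]
    ring
  have hcorr_eq : ∫ x in I, (g * ζ₀ x * φ x + σ * (F x * φ' x)) = γ * φ ℓ + γ * φ (-ℓ) := by
    rw [hsplit2, hA, hB]
    linear_combination φ ℓ * hbγ1 - φ (-ℓ) * hbγ2
  -- conclusion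
  have hbd : γ * (η ℓ + η (-ℓ)) - γ * (ζ₀ ℓ + ζ₀ (-ℓ)) = γ * φ ℓ + γ * φ (-ℓ) := by
    simp only [hφdef]; ring
  have hfinal : (∫ x in I, (g / 2 * ζ₀ x ^ 2 + σ * Real.sqrt (1 + Z' x ^ 2))) -
      γ * (ζ₀ ℓ + ζ₀ (-ℓ)) ≤
      (∫ x in I, (g / 2 * η x ^ 2 + σ * Real.sqrt (1 + η' x ^ 2))) - γ * (η ℓ + η (-ℓ)) := by
    linarith [hmono, hsplit, hcorr_eq, hbd]
  simp only [capEnergy, intervalIntegral.integral_of_le hab]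
  exact hfinal
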